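/- Let W : ℝ → ℝ be locally Lipschitz with liminf_{x→±∞} W(x)/|x| > −∞, and let F : ℝ → ℝ be continuous with lim_{|x|→∞} F(x)/|x| = 0. Define Φ W(y) = −2κ ln ∫_ℝ g_{2κ}(y−x) exp(−(F(x)+W(x))/(2κ)) dx, where g_{2κ} is the centered Gaussian density of variance 2κ and κ > 0. Then Φ W(y) is finite for every y, and liminf_{y→+∞} (Φ W)(y)/y > −∞ and liminf_{y→−∞} (Φ W)(y)/|y| > −∞ (i.e. Φ maps the class ℍ into itself). -/

import Mathlib

open MeasureTheory Filter Topology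

noncomputable def gaussVar (t u : ℝ) : ℝ :=
  (Real.sqrt (2 * Real.pi * t))⁻¹ * Real.exp (-u ^ 2 / (2 * t))

/-- The kicked Hopf–Cole/HJB one-step operator on potentials:
`Φ W(y) = −2κ ln ∫ g_{2κ}(y−x) exp(−(F(x)+W(x))/(2κ)) dx`. -/
noncomputable def PhiW (κ : ℝ) (F W : ℝ → ℝ) (y : ℝ) : ℝ :=
  -(2 * κ) * Real.log (∫ x : ℝ, gaussVar (2 * κ) (y - x) * Real.exp (-((F x + W x) / (2 * κ))))

lemma gaussVar_pos {t : ℝ} (ht : 0 < t) (u : ℝ) : 0 < gaussVar t u := by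
  have h : 0 < Real.sqrt (2 * Real.pi * t) := Real.sqrt_pos.mpr (by positivity)
  unfold gaussVar
  positivity

lemma gaussVar_continuous (t : ℝ) : Continuous (gaussVar t) := by
  unfold gaussVar
  fun_prop

lemma integrable_exp_quad {b : ℝ} (hb : 0 < b) (a : ℝ) :
    Integrable (fun u : ℝ => Real.exp (-b * u ^ 2 + a * u)) := by
  have h := ((integrable_exp_neg_mul_sq hb).comp_sub_right (a / (2 * b))).const_mul
      (Real.exp (a ^ 2 / (4 * b)))
  refine h.congr ?_
  filter_upwards with u
  rw [← Real.exp_add]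
  congr 1
  field_simp
  ring

lemma integrable_gauss_exp_abs {t : ℝ} (ht : 0 < t) (a : ℝ) :
    Integrable (fun u : ℝ => gaussVar t u * Real.exp (a * |u|)) := by
  have hb : 0 < 1 / (2 * t) := by positivity
  have hg := ((integrable_exp_quad hb a).add (integrable_exp_quad hb (-a))).const_mul
    ((Real.sqrt (2 * Real.pi * t))⁻¹)
  refine hg.mono' ?_ ?_
  · exact ((gaussVar_continuous t).mul
      (Real.continuous_exp.comp (continuous_const.mul continuous_abs))).aestronglyMeasurable
  · filter_upwards with u
    have h0 : 0 ≤ gaussVar t u * Real.exp (a * |u|) :=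
      mul_nonneg (gaussVar_pos ht u).le (Real.exp_nonneg _)
    rw [Real.norm_of_nonneg h0]
    unfold gaussVar
    rw [mul_assoc, ← Real.exp_add]
    have hs : 0 ≤ (Real.sqrt (2 * Real.pi * t))⁻¹ := by positivity
    refine mul_le_mul_of_nonneg_left ?_ hs
    rcases abs_choice u with h | h <;> rw [h]
    · calc Real.exp (-u ^ 2 / (2 * t) + a * u)
          = Real.exp (-(1 / (2 * t)) * u ^ 2 + a * u) := by ring_nf
        _ ≤ _ := le_add_of_nonneg_right (Real.exp_nonneg _)
    · calc Real.exp (-u ^ 2 / (2 * t) + a * -u)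
          = Real.exp (-(1 / (2 * t)) * u ^ 2 + -a * u) := by ring_nf
        _ ≤ _ := le_add_of_nonneg_left (Real.exp_nonneg _)

theorem stmt16 (κ : ℝ) (hκ : 0 < κ) (W F : ℝ → ℝ)
    (hWlip : ∀ K : Set ℝ, IsCompact K → ∃ L : NNReal, LipschitzOnWith L W K)
    (hWtop : ∃ c : ℝ, ∀ᶠ x in atTop, c ≤ W x / |x|)
    (hWbot : ∃ c : ℝ, ∀ᶠ x in atBot, c ≤ W x / |x|)
    (hF : Continuous F)
    (hFgrow : Tendsto (fun x => F x / |x|) (cocompact ℝ) (𝓝 0)) :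
    (∀ y : ℝ,
      Integrable (fun x => gaussVar (2 * κ) (y - x) * Real.exp (-((F x + W x) / (2 * κ))))) ∧
    (∃ c : ℝ, ∀ᶠ y in atTop, c ≤ PhiW κ F W y / y) ∧
    (∃ c : ℝ, ∀ᶠ y in atBot, c ≤ PhiW κ F W y / |y|) := by
  have h2κ : (0:ℝ) < 2 * κ := by linarith
  -- continuity of W
  have hWcont : Continuous W := by
    rw [continuous_iff_continuousAt]
    intro x
    obtain ⟨L, hL⟩ := hWlip (Set.Icc (x - 1) (x + 1)) isCompact_Icc
    exact hL.continuousOn.continuousAt (Icc_mem_nhds (by linarith) (by linarith))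
  -- uniform lower bound on F + W
  obtain ⟨k, hk, hbound⟩ : ∃ k : ℝ, 0 < k ∧ ∀ x, -(k * (|x| + 1)) ≤ F x + W x := by
    have hcoF : ∀ᶠ x in cocompact ℝ, -1 ≤ F x / |x| :=
      hFgrow.eventually (eventually_ge_nhds (show (-1:ℝ) < 0 by norm_num))
    rw [cocompact_eq_atBot_atTop, eventually_sup] at hcoF
    obtain ⟨hFbot, hFtop⟩ := hcoF
    obtain ⟨cW, hcW⟩ := hWtop
    obtain ⟨cW', hcW'⟩ := hWbot
    obtain ⟨R1, hR1⟩ := eventually_atTop.mp hFtop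
    obtain ⟨R2, hR2⟩ := eventually_atBot.mp hFbot
    obtain ⟨A1, hA1⟩ := eventually_atTop.mp hcW
    obtain ⟨A2, hA2⟩ := eventually_atBot.mp hcW'
    set R0 : ℝ := |R1| + |A1| + |R2| + |A2| + 1 with hR0def
    have hR0 : 1 ≤ R0 := by
      have := abs_nonneg R1; have := abs_nonneg A1
      have := abs_nonneg R2; have := abs_nonneg A2
      simp only [hR0def]; linarith
    obtain ⟨x0, hx0mem, hx0⟩ := isCompact_Icc.exists_isMinOn
      (Set.nonempty_Icc.mpr (by linarith : -R0 ≤ R0)) ((hF.add hWcont).continuousOn)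
    refine ⟨max (1 + |cW| + |cW'|) (-(F x0 + W x0)) + 1, ?_, ?_⟩
    · have h1 : (0:ℝ) < 1 + |cW| + |cW'| := by positivity
      have := le_max_left (1 + |cW| + |cW'|) (-(F x0 + W x0))
      linarith
    · intro x
      set k := max (1 + |cW| + |cW'|) (-(F x0 + W x0)) + 1 with hkdef
      have hk1 : 1 + |cW| + |cW'| ≤ k - 1 := by
        simp only [hkdef]; linarith [le_max_left (1 + |cW| + |cW'|) (-(F x0 + W x0))]
      have hk2 : -(F x0 + W x0) ≤ k - 1 := by
        simp only [hkdef]; linarith [le_max_right (1 + |cW| + |cW'|) (-(F x0 + W x0))]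
      have hkpos : 0 < k := by
        have := abs_nonneg cW; have := abs_nonneg cW'; linarith
      by_cases hx : |x| ≤ R0
      · have hmem : x ∈ Set.Icc (-R0) R0 := by
          rcases abs_le.mp hx with ⟨h1, h2⟩; exact ⟨h1, h2⟩
        have h1 : F x0 + W x0 ≤ F x + W x := hx0 hmem
        nlinarith [abs_nonneg x]
      · push_neg at hx
        rcases le_or_gt 0 x with hx0' | hx0'
        · have hxeq : |x| = x := abs_of_nonneg hx0'
          have hxR1 : R1 ≤ x := by
            rw [hxeq] at hx
            have := le_abs_self R1
            have := abs_nonneg A1; have := abs_nonneg R2; have := abs_nonneg A2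
            simp only [hR0def] at hx; linarith
          have hxA1 : A1 ≤ x := by
            rw [hxeq] at hx
            have := le_abs_self A1
            have := abs_nonneg R1; have := abs_nonneg R2; have := abs_nonneg A2
            simp only [hR0def] at hx; linarith
          have hxpos : 0 < |x| := by rw [hxeq]; linarith [hxeq ▸ hx, hR0]
          have hFx : -1 * |x| ≤ F x := (le_div_iff₀ hxpos).mp (hR1 x hxR1)
          have hWx : cW * |x| ≤ W x := (le_div_iff₀ hxpos).mp (hA1 x hxA1)
          nlinarith [abs_nonneg x,
            mul_nonneg (abs_nonneg x) (show (0:ℝ) ≤ k - 1 + cW by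
              linarith [neg_abs_le cW, abs_nonneg cW'])]
        · have hxeq : |x| = -x := abs_of_neg hx0'
          have hxR2 : x ≤ R2 := by
            rw [hxeq] at hx
            have := neg_abs_le R2
            have := abs_nonneg A1; have := abs_nonneg R1; have := abs_nonneg A2
            simp only [hR0def] at hx; linarith
          have hxA2 : x ≤ A2 := by
            rw [hxeq] at hx
            have := neg_abs_le A2
            have := abs_nonneg R1; have := abs_nonneg R2; have := abs_nonneg A1
            simp only [hR0def] at hx; linarith
          have hxpos : 0 < |x| := by rw [hxeq]; simp only [hR0def] at hx; linarith
          have hFx : -1 * |x| ≤ F x := (le_div_iff₀ hxpos).mp (hR2 x hxR2)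
          have hWx : cW' * |x| ≤ W x := (le_div_iff₀ hxpos).mp (hA2 x hxA2)
          nlinarith [abs_nonneg x,
            mul_nonneg (abs_nonneg x) (show (0:ℝ) ≤ k - 1 + cW' by
              linarith [neg_abs_le cW', abs_nonneg cW])]
  set a : ℝ := k / (2 * κ) with ha
  have ha0 : 0 < a := by positivity
  -- pointwise comparison
  have key : ∀ y x : ℝ, gaussVar (2 * κ) (y - x) * Real.exp (-((F x + W x) / (2 * κ))) ≤
      Real.exp (a * (|y| + 1)) * (gaussVar (2 * κ) (y - x) * Real.exp (a * |y - x|)) := by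
    intro y x
    have hg := gaussVar_pos h2κ (y - x)
    have habs : |x| ≤ |y - x| + |y| := by
      calc |x| = |(x - y) + y| := by ring_nf
        _ ≤ |x - y| + |y| := abs_add_le _ _
        _ = |y - x| + |y| := by rw [abs_sub_comm]
    have h1 : -((F x + W x) / (2 * κ)) ≤ a * (|y - x| + (|y| + 1)) := by
      rw [show -((F x + W x) / (2 * κ)) = (-(F x + W x)) / (2 * κ) by ring,
        div_le_iff₀ h2κ]
      have heq : a * (|y - x| + (|y| + 1)) * (2 * κ) = k * (|y - x| + (|y| + 1)) := by
        rw [ha]; field_simp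
      rw [heq]
      have hb := hbound x
      nlinarith [mul_le_mul_of_nonneg_left
        (show |x| + 1 ≤ |y - x| + (|y| + 1) by linarith) hk.le]
    calc gaussVar (2 * κ) (y - x) * Real.exp (-((F x + W x) / (2 * κ)))
        ≤ gaussVar (2 * κ) (y - x) * Real.exp (a * (|y - x| + (|y| + 1))) :=
          mul_le_mul_of_nonneg_left (Real.exp_le_exp.mpr h1) hg.le
      _ = Real.exp (a * (|y| + 1)) * (gaussVar (2 * κ) (y - x) * Real.exp (a * |y - x|)) := by
          rw [show a * (|y - x| + (|y| + 1)) = a * |y - x| + a * (|y| + 1) by ring,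
            Real.exp_add]; ring
  have hcont : ∀ y : ℝ, Continuous
      (fun x => gaussVar (2 * κ) (y - x) * Real.exp (-((F x + W x) / (2 * κ)))) := by
    intro y
    exact ((gaussVar_continuous (2 * κ)).comp (continuous_const.sub continuous_id)).mul
      (Real.continuous_exp.comp (by fun_prop))
  have hcomp : ∀ y : ℝ, Integrable
      (fun x => gaussVar (2 * κ) (y - x) * Real.exp (a * |y - x|)) := fun y =>
    (integrable_gauss_exp_abs h2κ a).comp_sub_left y
  have hInt : ∀ y : ℝ, Integrable
      (fun x => gaussVar (2 * κ) (y - x) * Real.exp (-((F x + W x) / (2 * κ)))) := by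
    intro y
    refine ((hcomp y).const_mul (Real.exp (a * (|y| + 1)))).mono'
      (hcont y).aestronglyMeasurable ?_
    filter_upwards with x
    rw [Real.norm_of_nonneg (mul_nonneg (gaussVar_pos h2κ (y - x)).le (Real.exp_nonneg _))]
    exact key y x
  refine ⟨hInt, ?_⟩
  set C0 : ℝ := ∫ u : ℝ, gaussVar (2 * κ) u * Real.exp (a * |u|) with hC0def
  have hC0 : 0 < C0 := by
    rw [hC0def, integral_pos_iff_support_of_nonneg
      (fun u => mul_nonneg (gaussVar_pos h2κ u).le (Real.exp_nonneg _))
      (integrable_gauss_exp_abs h2κ a)]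
    have hsupp : (Function.support fun u : ℝ => gaussVar (2 * κ) u * Real.exp (a * |u|)) =
        Set.univ :=
      Set.eq_univ_of_forall fun u =>
        (mul_pos (gaussVar_pos h2κ u) (Real.exp_pos _)).ne'
    rw [hsupp]
    simp
  have hIpos : ∀ y : ℝ,
      0 < ∫ x : ℝ, gaussVar (2 * κ) (y - x) * Real.exp (-((F x + W x) / (2 * κ))) := by
    intro y
    rw [integral_pos_iff_support_of_nonneg
      (fun x => mul_nonneg (gaussVar_pos h2κ (y - x)).le (Real.exp_nonneg _)) (hInt y)]
    have hsupp : (Function.support fun x : ℝ =>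
        gaussVar (2 * κ) (y - x) * Real.exp (-((F x + W x) / (2 * κ)))) = Set.univ :=
      Set.eq_univ_of_forall fun x =>
        (mul_pos (gaussVar_pos h2κ (y - x)) (Real.exp_pos _)).ne'
    rw [hsupp]
    simp
  have hIle : ∀ y : ℝ,
      (∫ x : ℝ, gaussVar (2 * κ) (y - x) * Real.exp (-((F x + W x) / (2 * κ)))) ≤
        Real.exp (a * (|y| + 1)) * C0 := by
    intro y
    calc (∫ x : ℝ, gaussVar (2 * κ) (y - x) * Real.exp (-((F x + W x) / (2 * κ))))
        ≤ ∫ x : ℝ, Real.exp (a * (|y| + 1)) *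
            (gaussVar (2 * κ) (y - x) * Real.exp (a * |y - x|)) :=
          integral_mono (hInt y) ((hcomp y).const_mul _) (key y)
      _ = Real.exp (a * (|y| + 1)) *
            ∫ x : ℝ, gaussVar (2 * κ) (y - x) * Real.exp (a * |y - x|) :=
          integral_const_mul _ _
      _ = Real.exp (a * (|y| + 1)) * C0 := by
          rw [hC0def,
            integral_sub_left_eq_self (fun u => gaussVar (2 * κ) u * Real.exp (a * |u|)) volume y]
  -- lower bound on PhiW
  have hPhi : ∀ y : ℝ, -(k * (|y| + 1)) - 2 * κ * Real.log C0 ≤ PhiW κ F W y := by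
    intro y
    have hlog : Real.log (∫ x : ℝ, gaussVar (2 * κ) (y - x) *
        Real.exp (-((F x + W x) / (2 * κ)))) ≤ a * (|y| + 1) + Real.log C0 := by
      have h := Real.log_le_log (hIpos y) (hIle y)
      rwa [Real.log_mul (Real.exp_ne_zero _) hC0.ne', Real.log_exp] at h
    have hmul := mul_le_mul_of_nonneg_left hlog h2κ.le
    have hck : 2 * κ * (a * (|y| + 1) + Real.log C0) =
        k * (|y| + 1) + 2 * κ * Real.log C0 := by
      rw [ha]; field_simp
    unfold PhiW
    rw [hck] at hmul
    linarith
  set D : ℝ := k + 2 * κ * Real.log C0 with hD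
  refine ⟨⟨-k - |D|, ?_⟩, ⟨-k - |D|, ?_⟩⟩
  · filter_upwards [eventually_ge_atTop (1:ℝ)] with y hy
    have hy0 : (0:ℝ) < y := by linarith
    rw [le_div_iff₀ hy0]
    have h := hPhi y
    rw [abs_of_pos hy0] at h
    nlinarith [le_abs_self D, abs_nonneg D]
  · filter_upwards [eventually_le_atBot (-1:ℝ)] with y hy
    have hy0 : (0:ℝ) < |y| := by rw [abs_of_neg (by linarith)]; linarith
    rw [le_div_iff₀ hy0]
    have h := hPhi y
    have hy1 : (1:ℝ) ≤ |y| := by rw [abs_of_neg (by linarith)]; linarith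
    nlinarith [le_abs_self D, abs_nonneg D, hy1]
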